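/- Let n ≥ 1 and S be natural numbers, and set a = ⌊S/n⌋ and b = S − a·n. Then for every tuple (w_1, …, w_n) of natural numbers with ∑_{k=1}^n w_k = S one has ∑_{k=1}^n 2^{w_k} ≥ (n − b)·2^a + b·2^{a+1}, and this lower bound is attained by the balanced tuple having b coordinates equal to a+1 and n − b coordinates equal to a. Consequently (n − b)(2^a − 1) + b(2^{a+1} − 1) is the minimum of ∑_{k=1}^n (2^{w_k} − 1) over all such tuples. -/

import Mathlib

lemma tangent_pow_aux (a w : ℕ) : (2:ℤ)^a * ((w:ℤ) - a + 1) ≤ 2^w := by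
  rcases le_or_gt a w with h | h
  · obtain ⟨d, rfl⟩ := Nat.exists_eq_add_of_le h
    have hd : (d:ℤ) < 2 ^ d := by exact_mod_cast (Nat.lt_two_pow_self (n := d))
    have : (2:ℤ)^a * ((↑(a+d):ℤ) - a + 1) ≤ 2^a * 2^d := by
      apply mul_le_mul_of_nonneg_left _ (by positivity)
      push_cast; linarith
    calc (2:ℤ)^a * ((↑(a+d):ℤ) - a + 1) ≤ 2^a * 2^d := this
      _ = 2^(a+d) := by rw [pow_add]
  · have h1 : ((w:ℤ) - a + 1) ≤ 0 := by
      have : (w:ℤ) + 1 ≤ a := by exact_mod_cast h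
      linarith
    have h2 := mul_nonpos_of_nonneg_of_nonpos (by positivity : (0:ℤ) ≤ 2^a) h1
    have h3 : (0:ℤ) < 2^w := by positivity
    linarith

lemma sum_if_lt_aux (n b x y : ℕ) (hbn : b ≤ n) :
    ∑ k : Fin n, (if (k : ℕ) < b then x else y) = b * x + (n - b) * y := by
  rw [Fin.sum_univ_eq_sum_range (fun m => if m < b then x else y) n]
  rw [Finset.range_eq_Ico, ← Finset.sum_Ico_consecutive _ (Nat.zero_le b) hbn]
  have e1 : ∑ m ∈ Finset.Ico 0 b, (if m < b then x else y) = b * x := by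
    rw [Finset.sum_congr rfl (fun m hm => if_pos (Finset.mem_Ico.mp hm).2)]
    simp [mul_comm]
  have e2 : ∑ m ∈ Finset.Ico b n, (if m < b then x else y) = (n - b) * y := by
    rw [Finset.sum_congr rfl (fun m hm => if_neg (not_lt.mpr (Finset.mem_Ico.mp hm).1))]
    simp [mul_comm]
  rw [e1, e2]

theorem min_mac_conditions_balanced (n S : ℕ) (hn : 1 ≤ n)
    (a b : ℕ) (ha : a = S / n) (hb : b = S - a * n) :
    (∀ w : Fin n → ℕ, ∑ k, w k = S →
      (n - b) * 2 ^ a + b * 2 ^ (a + 1) ≤ ∑ k, 2 ^ w k) ∧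
    (∑ k : Fin n, (if (k : ℕ) < b then a + 1 else a) = S ∧
      ∑ k : Fin n, 2 ^ (if (k : ℕ) < b then a + 1 else a) =
        (n - b) * 2 ^ a + b * 2 ^ (a + 1)) ∧
    IsLeast {t : ℕ | ∃ w : Fin n → ℕ, ∑ k, w k = S ∧ t = ∑ k, (2 ^ w k - 1)}
      ((n - b) * (2 ^ a - 1) + b * (2 ^ (a + 1) - 1)) := by
  have hn0 : 0 < n := hn
  have h1 : a * n ≤ S := ha ▸ Nat.div_mul_le_self S n
  have h2 : a * n + b = S := by rw [hb, Nat.add_sub_cancel' h1]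
  have hmod : b = S % n := by
    rw [hb, ha]
    have h' : S / n * n + S % n = S := by rw [mul_comm]; exact Nat.div_add_mod S n
    exact Nat.sub_eq_of_eq_add (by omega)
  have hbn : b < n := by
    rw [hmod]; exact Nat.mod_lt S hn0
  have hble : b ≤ n := hbn.le
  -- key arithmetic identity with the subtraction-free value
  have h2a : 1 ≤ 2 ^ a := Nat.one_le_two_pow
  have h2a1 : 1 ≤ 2 ^ (a + 1) := Nat.one_le_two_pow
  -- Part 1: the lower bound
  have part1 : ∀ w : Fin n → ℕ, ∑ k, w k = S →
      (n - b) * 2 ^ a + b * 2 ^ (a + 1) ≤ ∑ k, 2 ^ w k := by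
    intro w hw
    have hS : ∑ k : Fin n, (w k : ℤ) = (S : ℤ) := by
      rw [← Nat.cast_sum, hw]
    have key : ((n - b) * 2 ^ a + b * 2 ^ (a + 1) : ℤ) ≤ ∑ k : Fin n, (2:ℤ) ^ w k := by
      have step1 : ∑ k : Fin n, (2:ℤ)^a * ((w k : ℤ) - a + 1) ≤ ∑ k : Fin n, (2:ℤ) ^ w k :=
        Finset.sum_le_sum (fun k _ => tangent_pow_aux a (w k))
      have step2 : ∑ k : Fin n, (2:ℤ)^a * ((w k : ℤ) - a + 1)
          = (2:ℤ)^a * ((S:ℤ) - n * a + n) := by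
        rw [← Finset.mul_sum]
        congr 1
        rw [Finset.sum_add_distrib, Finset.sum_sub_distrib, hS]
        simp [Finset.card_univ]
      have h2' : (a : ℤ) * n + b = S := by exact_mod_cast h2
      calc ((n - b) * 2 ^ a + b * 2 ^ (a + 1) : ℤ)
          = (2:ℤ)^a * ((S:ℤ) - n * a + n) := by
            push_cast [Nat.cast_sub hble]; linear_combination (2:ℤ)^a * h2'
        _ = ∑ k : Fin n, (2:ℤ)^a * ((w k : ℤ) - a + 1) := step2.symm
        _ ≤ ∑ k : Fin n, (2:ℤ) ^ w k := step1
    zify [hble]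
    push_cast
    convert key using 2
  -- Part 2: attainment
  have hsum2 : ∑ k : Fin n, (if (k : ℕ) < b then a + 1 else a) = S := by
    rw [sum_if_lt_aux n b (a+1) a hble]
    have : b * (a + 1) + (n - b) * a = a * n + b := by
      zify [hble]; ring
    rw [this, h2]
  have hpow2 : ∑ k : Fin n, 2 ^ (if (k : ℕ) < b then a + 1 else a)
      = (n - b) * 2 ^ a + b * 2 ^ (a + 1) := by
    have : ∀ k : Fin n, 2 ^ (if (k : ℕ) < b then a + 1 else a)
        = (if (k : ℕ) < b then 2^(a+1) else 2^a) := by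
      intro k; split <;> rfl
    rw [Finset.sum_congr rfl (fun k _ => this k), sum_if_lt_aux n b (2^(a+1)) (2^a) hble]
    ring
  -- arithmetic: L' + n = B
  have hLB : (n - b) * (2 ^ a - 1) + b * (2 ^ (a + 1) - 1) + n
      = (n - b) * 2 ^ a + b * 2 ^ (a + 1) := by
    zify [hble, h2a, h2a1]; ring
  -- sum with -1 relation
  have hsum_pred : ∀ w : Fin n → ℕ,
      ∑ k : Fin n, (2 ^ w k - 1) + n = ∑ k : Fin n, 2 ^ w k := by
    intro w
    have : ∀ k : Fin n, 2 ^ w k - 1 + 1 = 2 ^ w k :=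
      fun k => Nat.sub_add_cancel Nat.one_le_two_pow
    calc ∑ k : Fin n, (2 ^ w k - 1) + n
        = ∑ k : Fin n, (2 ^ w k - 1 + 1) := by
          rw [Finset.sum_add_distrib]; simp [Finset.card_univ]
      _ = ∑ k : Fin n, 2 ^ w k := Finset.sum_congr rfl (fun k _ => this k)
  refine ⟨part1, ⟨hsum2, hpow2⟩, ?_, ?_⟩
  · -- membership
    refine ⟨fun k => if (k : ℕ) < b then a + 1 else a, hsum2, ?_⟩
    have h3 := hsum_pred (fun k => if (k : ℕ) < b then a + 1 else a)
    rw [hpow2] at h3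
    exact (Nat.add_right_cancel (hLB.symm ▸ h3)).symm
  · -- lower bound
    rintro t ⟨w, hw, rfl⟩
    have hB := part1 w hw
    have h3 := hsum_pred w
    have h4 : (n - b) * (2 ^ a - 1) + b * (2 ^ (a + 1) - 1) + n
        ≤ ∑ k : Fin n, (2 ^ w k - 1) + n := by rw [hLB, h3]; exact hB
    exact Nat.le_of_add_le_add_right h4
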